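/- Let k ≥ 5 and suppose 3k/2 ≤ n ≤ (k+1)(k+4)/6. Then (k+1)(n−k) + 2 ≤ C(k,0) + C(k,1) + C(k,2) + C(k,3), and consequently g(n,k) ≥ k−3. -/

import Mathlib

open scoped Classical

noncomputable section

/-- Boolean functions in `n` variables. -/
abbrev BF (n : ℕ) := (Fin n → ZMod 2) → ZMod 2

/-- `A` is a `k`-dimensional flat (coset of a `k`-dimensional linear subspace) of `𝔽₂ⁿ`. -/
def IsFlat {n : ℕ} (A : Set (Fin n → ZMod 2)) (k : ℕ) : Prop :=
  ∃ (W : Submodule (ZMod 2) (Fin n → ZMod 2)) (v : Fin n → ZMod 2),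
    Module.finrank (ZMod 2) W = k ∧ A = (fun w => v + w) '' (W : Set (Fin n → ZMod 2))

/-- The sum (parity) of `f` over a subset of `𝔽₂ⁿ`. -/
def flatSum {n : ℕ} (f : BF n) (A : Set (Fin n → ZMod 2)) : ZMod 2 :=
  ∑ x ∈ A.toFinite.toFinset, f x

/-- The restriction of `f` to `A` has algebraic degree at most `d`:
by the standard parity criterion, this holds iff the sum of `f` over every
`(d+1)`-dimensional flat contained in `A` vanishes. -/
def DegLE {n : ℕ} (f : BF n) (A : Set (Fin n → ZMod 2)) (d : ℕ) : Prop :=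
  ∀ B : Set (Fin n → ZMod 2), IsFlat B (d + 1) → B ⊆ A → flatSum f B = 0

/-- The algebraic degree of the restriction of `f` to `A`. -/
def degOn {n : ℕ} (f : BF n) (A : Set (Fin n → ZMod 2)) : ℕ :=
  sInf {d | DegLE f A d}

/-- `α(f, k)`: the minimal algebraic degree of `f` restricted to a `k`-dimensional flat. -/
def alphaDeg {n : ℕ} (f : BF n) (k : ℕ) : ℕ :=
  sInf {d | ∃ A, IsFlat A k ∧ degOn f A = d}

/-- `g(n, k) = max_f α(f, k)`. -/
def gdeg (n k : ℕ) : ℕ :=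
  sSup {m | ∃ f : BF n, alphaDeg f k = m}

/-- The nonlinearity of the restriction of `f` to `A`: the minimal Hamming distance,
on `A`, from `f` to an affine function. -/
def nlOn {n : ℕ} (f : BF n) (A : Set (Fin n → ZMod 2)) : ℕ :=
  sInf {m | ∃ (a : Fin n → ZMod 2) (c : ZMod 2),
    m = (A.toFinite.toFinset.filter (fun x => f x ≠ (∑ i, a i * x i) + c)).card}

lemma two_choose (k : ℕ) : 2 * Nat.choose k 2 = k * (k - 1) := by
  induction k with
  | zero => rfl
  | succ k ih =>
    rcases k with _ | m
    · rfl
    · rw [Nat.choose_succ_succ, Nat.mul_add, ih, Nat.choose_one_right]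
      simp [Nat.succ_sub_one]
      ring

lemma three_choose (k : ℕ) : 6 * Nat.choose k 3 = k * (k - 1) * (k - 2) := by
  induction k with
  | zero => rfl
  | succ k ih =>
    rcases k with _ | _ | m
    · rfl
    · rfl
    · rw [Nat.choose_succ_succ, Nat.mul_add, ih]
      have h2 := two_choose (m + 2)
      simp [Nat.succ_sub_one] at *
      nlinarith [h2]

lemma arith_part {n k : ℕ} (hk : 5 ≤ k) (h1 : 3 * k ≤ 2 * n)
    (h2 : 6 * n ≤ (k + 1) * (k + 4)) :
    (k + 1) * (n - k) + 2 ≤ ∑ i ∈ Finset.range 4, Nat.choose k i := by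
  have hkn : k ≤ n := by omega
  obtain ⟨m, rfl⟩ : ∃ m, n = k + m := ⟨n - k, by omega⟩
  obtain ⟨j, rfl⟩ : ∃ j, k = j + 5 := ⟨k - 5, by omega⟩
  have c2 := two_choose (j + 5)
  have c3 := three_choose (j + 5)
  simp only [Finset.sum_range_succ, Finset.sum_range_zero, Nat.choose_zero_right,
    Nat.choose_one_right]
  have hm : 6 * m ≤ j * j + 9 * j + 24 := by nlinarith
  have hsub : j + 5 - 1 = j + 4 := by omega
  have hsub2 : j + 5 - 2 = j + 3 := by omega
  rw [hsub] at c2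
  rw [hsub, hsub2] at c3
  have hmm : j + 5 + m - (j + 5) = m := by omega
  rw [hmm]
  nlinarith [c2, c3, hm, Nat.mul_le_mul_left (j + 6) hm]

def Pprod (k : ℕ) : ℕ := ∏ j ∈ Finset.range k, (2 ^ (j + 1) - 1)

lemma pprod_step (k : ℕ) (hk : 1 ≤ k)
    (ih : (2 ^ k + 2) * 2 ^ ((∑ i ∈ Finset.range k, i) + k) ≤ 2 ^ k * 4 * Pprod k) :
    (2 ^ (k + 1) + 2) * 2 ^ ((∑ i ∈ Finset.range (k + 1), i) + (k + 1)) ≤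
      2 ^ (k + 1) * 4 * Pprod (k + 1) := by
  have hP : Pprod (k + 1) = Pprod k * (2 ^ (k + 1) - 1) := by
    rw [Pprod, Finset.prod_range_succ]; rfl
  have hS : (∑ i ∈ Finset.range (k + 1), i) = (∑ i ∈ Finset.range k, i) + k :=
    Finset.sum_range_succ _ _
  have hK : (2:ℕ) ≤ 2 ^ k := by
    calc (2:ℕ) = 2 ^ 1 := rfl
    _ ≤ 2 ^ k := Nat.pow_le_pow_right (by norm_num) hk
  set K := (2:ℕ) ^ k with hKdef
  have hmul : (2 * K + 2) * (2 * K) ≤ (K + 2) * (2 * (2 * K - 1)) := by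
    have : 2 * K - 1 + 1 = 2 * K := by omega
    nlinarith [this]
  calc (2 ^ (k + 1) + 2) * 2 ^ ((∑ i ∈ Finset.range (k + 1), i) + (k + 1))
      = ((2 * K + 2) * (2 * K)) * 2 ^ ((∑ i ∈ Finset.range k, i) + k) := by
        simp only [hS, hKdef, pow_add, pow_succ, pow_one]; ring
    _ ≤ ((K + 2) * (2 * (2 * K - 1))) * 2 ^ ((∑ i ∈ Finset.range k, i) + k) :=
        Nat.mul_le_mul_right _ hmul
    _ = ((K + 2) * 2 ^ ((∑ i ∈ Finset.range k, i) + k)) * (2 * (2 * K - 1)) := by ring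
    _ ≤ (K * 4 * Pprod k) * (2 * (2 * K - 1)) := Nat.mul_le_mul_right _ ih
    _ = 2 ^ (k + 1) * 4 * Pprod (k + 1) := by
        rw [hP, pow_succ, ← hKdef]; ring

lemma pprod_lower (k : ℕ) :
    (2 ^ k + 2) * 2 ^ ((∑ i ∈ Finset.range k, i) + k) ≤ 2 ^ k * 4 * Pprod k := by
  induction k with
  | zero => decide
  | succ k ih =>
    rcases Nat.eq_zero_or_pos k with rfl | hk
    · decide
    · exact pprod_step k hk ih

lemma NB_eq (k : ℕ) :
    ∏ i ∈ Finset.range k, (2 ^ k - 2 ^ i) = 2 ^ (∑ i ∈ Finset.range k, i) * Pprod k := by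
  have h1 : ∀ i ∈ Finset.range k, (2:ℕ) ^ k - 2 ^ i = 2 ^ i * (2 ^ (k - i) - 1) := by
    intro i hi
    rw [Finset.mem_range] at hi
    have : (2:ℕ) ^ i * 2 ^ (k - i) = 2 ^ k := by
      rw [← pow_add]; congr 1; omega
    rw [Nat.mul_sub, this, mul_one]
  rw [Finset.prod_congr rfl h1, Finset.prod_mul_distrib, Finset.prod_pow_eq_pow_sum]
  congr 1
  rw [Pprod]
  rw [← Finset.prod_range_reflect (fun j => 2 ^ (j + 1) - 1) k]
  apply Finset.prod_congr rfl
  intro j hj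
  rw [Finset.mem_range] at hj
  congr 2
  omega


/-! ### cube machinery -/

/-- extension-by-zero linear map from coordinates in `T`. -/
def rho {r : ℕ} (T : Finset (Fin r)) : (↥T → ZMod 2) →ₗ[ZMod 2] (Fin r → ZMod 2) where
  toFun c := fun i => if h : i ∈ T then c ⟨i, h⟩ else 0
  map_add' x y := by funext i; by_cases h : i ∈ T <;> simp [h]
  map_smul' m x := by funext i; by_cases h : i ∈ T <;> simp [h]

lemma rho_injective {r : ℕ} (T : Finset (Fin r)) : Function.Injective (rho T) := by
  intro x y h
  funext i
  have := congrFun h i.1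
  simpa [rho, i.2] using this

lemma mem_range_rho {r : ℕ} (T : Finset (Fin r)) (x : Fin r → ZMod 2) :
    x ∈ LinearMap.range (rho T) ↔ ∀ i ∉ T, x i = 0 := by
  constructor
  · rintro ⟨c, rfl⟩ i hi
    simp [rho, hi]
  · intro h
    exact ⟨fun i => x i.1, by funext i; by_cases hi : i ∈ T <;> simp [rho, hi, h i]⟩

lemma isFlat_cube_image {n r : ℕ} (L : (Fin r → ZMod 2) →ₗ[ZMod 2] (Fin n → ZMod 2))
    (hL : Function.Injective L) (v : Fin n → ZMod 2) (T : Finset (Fin r)) (a : Fin r → ZMod 2) :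
    IsFlat ((fun x => v + L x) '' {x | ∀ i ∉ T, x i = a i}) T.card := by
  refine ⟨LinearMap.range (L.comp (rho T)), v + L a, ?_, ?_⟩
  · have hinj : Function.Injective ⇑(L.comp (rho T)) := by
      rw [LinearMap.coe_comp]; exact hL.comp (rho_injective T)
    rw [LinearMap.finrank_range_of_inj hinj,
      Module.finrank_fintype_fun_eq_card, Fintype.card_coe]
  · ext y
    constructor
    · rintro ⟨x, hx, rfl⟩
      have hxa : x - a ∈ LinearMap.range (rho T) := by
        rw [mem_range_rho]
        intro i hi
        simp [hx i hi]
      obtain ⟨c, hc⟩ := hxa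
      refine ⟨L (x - a), ⟨c, by rw [LinearMap.comp_apply, hc]⟩, ?_⟩
      simp only [map_sub]
      abel
    · rintro ⟨w, ⟨c, rfl⟩, rfl⟩
      refine ⟨a + rho T c, fun i hi => ?_, ?_⟩
      · simp [rho, hi]
      · simp only [map_add, LinearMap.comp_apply]
        abel

lemma flatSum_image {n : ℕ} {α : Type*} (f : BF n) (φ : α → (Fin n → ZMod 2))
    (hφ : Function.Injective φ) (c : Finset α) :
    flatSum f (φ '' ↑c) = ∑ x ∈ c, f (φ x) := by
  rw [flatSum]
  rw [show (φ '' ↑c).toFinite.toFinset = c.image φ by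
    apply Finset.coe_injective; rw [Set.Finite.coe_toFinset, Finset.coe_image]]
  exact Finset.sum_image (fun x _ y _ h => hφ h)

lemma flatSum_union {n : ℕ} (f : BF n) {B C : Set (Fin n → ZMod 2)} (hd : Disjoint B C) :
    flatSum f (B ∪ C) = flatSum f B + flatSum f C := by
  rw [flatSum, flatSum, flatSum]
  rw [show (B ∪ C).toFinite.toFinset = B.toFinite.toFinset ∪ C.toFinite.toFinset by
    apply Finset.coe_injective
    simp only [Set.Finite.coe_toFinset, Finset.coe_union]]
  exact Finset.sum_union (Set.Finite.disjoint_toFinset.mpr hd)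

/-- A flat admits an injective linear parameterization. -/
lemma exists_param {n r : ℕ} {A : Set (Fin n → ZMod 2)} (hA : IsFlat A r) :
    ∃ (L : (Fin r → ZMod 2) →ₗ[ZMod 2] (Fin n → ZMod 2)) (v : Fin n → ZMod 2),
      Function.Injective L ∧ A = (fun x => v + L x) '' Set.univ := by
  obtain ⟨W, v, hW, rfl⟩ := hA
  have : Module.Finite (ZMod 2) W := Module.Finite.of_finite  -- W finite
  let b : Module.Basis (Fin r) (ZMod 2) W := Module.finBasisOfFinrankEq (ZMod 2) W hW
  let e : (Fin r → ZMod 2) →ₗ[ZMod 2] W := (b.equivFun.symm : (Fin r → ZMod 2) ≃ₗ[ZMod 2] W)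
  refine ⟨W.subtype.comp e, v, ?_, ?_⟩
  · exact W.injective_subtype.comp b.equivFun.symm.injective
  · ext y
    simp only [Set.mem_image, Set.image_univ, Set.mem_range]
    constructor
    · rintro ⟨w, hw, rfl⟩
      refine ⟨b.equivFun ⟨w, hw⟩, ?_⟩
      have : (b.equivFun.symm : (Fin r → ZMod 2) →ₗ[ZMod 2] W) (b.equivFun ⟨w, hw⟩)
          = (⟨w, hw⟩ : W) := by
        rw [LinearEquiv.coe_coe, LinearEquiv.symm_apply_apply]
      rw [LinearMap.comp_apply, this, Submodule.coe_subtype]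
    · rintro ⟨x, rfl⟩
      exact ⟨e x, (e x).2, rfl⟩

lemma zmod2_cases (a : ZMod 2) : a = 0 ∨ a = 1 := by revert a; decide

/-- A flat of dimension `r ≥ s` on which all `s`-dimensional subflats have zero sum
itself has zero sum. -/
lemma flatSum_eq_zero_of_subflats {n s : ℕ} (f : BF n) :
    ∀ r, s ≤ r → ∀ A : Set (Fin n → ZMod 2), IsFlat A r →
      (∀ C, IsFlat C s → C ⊆ A → flatSum f C = 0) → flatSum f A = 0 := by
  intro r
  induction r with
  | zero => intro hs A hA h; have : s = 0 := by omega
            exact h A (this ▸ hA) subset_rfl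
  | succ r ih =>
    intro hs A hA h
    rcases Nat.eq_or_lt_of_le hs with heq | hlt
    · exact h A (heq ▸ hA) subset_rfl
    have hsr : s ≤ r := by omega
    obtain ⟨L, v, hL, rfl⟩ := exists_param hA
    set T₀ : Finset (Fin (r + 1)) := Finset.univ.erase (Fin.last r) with hT₀
    have hT₀card : T₀.card = r := by
      rw [hT₀, Finset.card_erase_of_mem (Finset.mem_univ _), Finset.card_univ,
        Fintype.card_fin]
      omega
    have hnotmem : ∀ i : Fin (r + 1), i ∉ T₀ ↔ i = Fin.last r := by
      intro i; simp [hT₀]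
    set e : Fin (r + 1) → ZMod 2 := fun i => if i = Fin.last r then 1 else 0 with he
    set C0 : Set (Fin (r + 1) → ZMod 2) := {x | ∀ i ∉ T₀, x i = (0 : ZMod 2)} with hC0
    set C1 : Set (Fin (r + 1) → ZMod 2) := {x | ∀ i ∉ T₀, x i = e i} with hC1
    have hC0' : C0 = {x | x (Fin.last r) = 0} := by
      ext x; simp only [hC0, Set.mem_setOf_eq]
      constructor
      · intro hh; exact hh _ (by simp [hnotmem])
      · intro hh i hi; rwa [(hnotmem i).mp hi]
    have hC1' : C1 = {x | x (Fin.last r) = 1} := by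
      ext x; simp only [hC1, Set.mem_setOf_eq]
      constructor
      · intro hh
        have := hh (Fin.last r) (by simp [hnotmem])
        rw [this, he]; simp
      · intro hh i hi; rw [(hnotmem i).mp hi]; simpa [he] using hh
    have hunion : (Set.univ : Set (Fin (r + 1) → ZMod 2)) = C0 ∪ C1 := by
      ext x
      simp only [Set.mem_univ, true_iff, Set.mem_union, hC0', hC1', Set.mem_setOf_eq]
      exact zmod2_cases _
    have hdisj : Disjoint C0 C1 := by
      rw [hC0', hC1', Set.disjoint_left]
      intro x hx0 hx1
      simp only [Set.mem_setOf_eq] at hx0 hx1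
      rw [hx0] at hx1; exact absurd hx1 (by decide)
    have himg : ((fun x => v + L x) '' Set.univ)
        = ((fun x => v + L x) '' C0) ∪ ((fun x => v + L x) '' C1) := by
      rw [hunion, Set.image_union]
    have hinj : Function.Injective (fun x => v + L x) := fun x y hxy => by
      apply hL; have := hxy; simpa using this
    have hdisj' : Disjoint ((fun x => v + L x) '' C0) ((fun x => v + L x) '' C1) :=
      (Set.disjoint_image_iff hinj).mpr hdisj
    have hflat0 : IsFlat ((fun x => v + L x) '' C0) r := by
      have := isFlat_cube_image L hL v T₀ 0
      rwa [hT₀card] at this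
    have hflat1 : IsFlat ((fun x => v + L x) '' C1) r := by
      have := isFlat_cube_image L hL v T₀ e
      rwa [hT₀card] at this
    have hsub0 : ((fun x => v + L x) '' C0) ⊆ ((fun x => v + L x) '' Set.univ) :=
      Set.image_mono (Set.subset_univ _)
    have hsub1 : ((fun x => v + L x) '' C1) ⊆ ((fun x => v + L x) '' Set.univ) :=
      Set.image_mono (Set.subset_univ _)
    rw [himg, flatSum_union f hdisj',
      ih hsr _ hflat0 (fun C hC hCsub => h C hC (hCsub.trans hsub0)),
      ih hsr _ hflat1 (fun C hC hCsub => h C hC (hCsub.trans hsub1)), add_zero]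

lemma degLE_flats_ge {n d t : ℕ} {f : BF n} {A B : Set (Fin n → ZMod 2)}
    (hdeg : DegLE f A d) (hB : IsFlat B t) (hBA : B ⊆ A) (ht : d + 1 ≤ t) :
    flatSum f B = 0 :=
  flatSum_eq_zero_of_subflats f t ht B hB (fun C hC hCB => hdeg C hC (hCB.trans hBA))

lemma exists_flat {n k : ℕ} (hkn : k ≤ n) : ∃ A : Set (Fin n → ZMod 2), IsFlat A k := by
  set T : Finset (Fin n) := Finset.univ.filter (fun i => i.1 < k) with hT
  have hcard : T.card = k := by
    rw [hT, ← Fintype.card_subtype]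
    have e : {i : Fin n // i.1 < k} ≃ Fin k :=
      { toFun := fun i => ⟨i.1.1, i.2⟩
        invFun := fun j => ⟨⟨j.1, lt_of_lt_of_le j.2 hkn⟩, j.2⟩
        left_inv := fun i => by ext; rfl
        right_inv := fun j => by ext; rfl }
    rw [Fintype.card_congr e, Fintype.card_fin]
  refine ⟨(fun w => 0 + w) '' (LinearMap.range (rho T) : Set _),
    LinearMap.range (rho T), 0, ?_, rfl⟩
  rw [LinearMap.finrank_range_of_inj (rho_injective T),
    Module.finrank_fintype_fun_eq_card, Fintype.card_coe, hcard]

lemma flat_card {n r : ℕ} {A : Set (Fin n → ZMod 2)} (hA : IsFlat A r) :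
    A.toFinite.toFinset.card = 2 ^ r := by
  obtain ⟨L, v, hL, rfl⟩ := exists_param hA
  have hinj : Function.Injective (fun x => v + L x) := fun x y hxy => by
    apply hL; simpa using hxy
  rw [show (Set.univ : Set (Fin r → ZMod 2)) = ↑(Finset.univ : Finset (Fin r → ZMod 2)) by simp]
  rw [show ((fun x => v + L x) '' ↑(Finset.univ : Finset (Fin r → ZMod 2))).toFinite.toFinset
      = Finset.univ.image (fun x => v + L x) by
    apply Finset.coe_injective; rw [Set.Finite.coe_toFinset, Finset.coe_image]]
  rw [Finset.card_image_of_injective _ hinj, Finset.card_univ]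
  simp [Fintype.card_fun]

lemma degLE_self {n k : ℕ} (f : BF n) {A : Set (Fin n → ZMod 2)} (hA : IsFlat A k) :
    DegLE f A k := by
  intro B hB hBA
  exfalso
  have h1 : B.toFinite.toFinset.card = 2 ^ (k + 1) := flat_card hB
  have h2 : A.toFinite.toFinset.card = 2 ^ k := flat_card hA
  have hsub : B.toFinite.toFinset ⊆ A.toFinite.toFinset := by
    intro x hx
    simp only [Set.Finite.mem_toFinset] at *
    exact hBA hx
  have := Finset.card_le_card hsub
  rw [h1, h2] at this
  have h3 : (2:ℕ) ^ k < 2 ^ (k + 1) := by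
    have hp : 0 < (2:ℕ) ^ k := by positivity
    rw [pow_succ]; omega
  omega

/-! ### The parity-check linear map -/

def Tset (k : ℕ) : Type := {T : Finset (Fin k) // k - 3 ≤ T.card}

instance (k : ℕ) : Fintype (Tset k) := by unfold Tset; infer_instance

def CubeF {r : ℕ} (T : Finset (Fin r)) : Finset (Fin r → ZMod 2) :=
  Finset.univ.filter (fun x => ∀ i ∉ T, x i = 0)

def SigmaMap (n k : ℕ) (L : (Fin k → ZMod 2) →ₗ[ZMod 2] (Fin n → ZMod 2))
    (v : Fin n → ZMod 2) : BF n →ₗ[ZMod 2] (Tset k → ZMod 2) where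
  toFun f := fun T => ∑ x ∈ CubeF T.1, f (v + L x)
  map_add' f g := by funext T; simp [Finset.sum_add_distrib]
  map_smul' c f := by funext T; simp [Finset.mul_sum]

lemma coe_cubeF {r : ℕ} (T : Finset (Fin r)) :
    (↑(CubeF T) : Set (Fin r → ZMod 2)) = {x | ∀ i ∉ T, x i = (0 : Fin r → ZMod 2) i} := by
  ext x; simp [CubeF]

lemma sigma_zero_of_degLE {n k : ℕ} (hk : 4 ≤ k)
    (L : (Fin k → ZMod 2) →ₗ[ZMod 2] (Fin n → ZMod 2)) (hL : Function.Injective L)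
    (v : Fin n → ZMod 2) {A : Set (Fin n → ZMod 2)}
    (hA : A = (fun x => v + L x) '' Set.univ) {f : BF n} (hf : DegLE f A (k - 4)) :
    SigmaMap n k L v f = 0 := by
  funext T
  have hφ : Function.Injective (fun x => v + L x) := fun x y hxy => by
    apply hL; simpa using hxy
  have h1 : (SigmaMap n k L v f) T
      = flatSum f ((fun x => v + L x) '' ↑(CubeF T.1)) := by
    rw [flatSum_image f _ hφ]; rfl
  rw [h1, coe_cubeF]
  have hsub : ((fun x => v + L x) '' {x | ∀ i ∉ T.1, x i = (0 : Fin k → ZMod 2) i}) ⊆ A := by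
    rw [hA]; exact Set.image_mono (Set.subset_univ _)
  have := degLE_flats_ge hf (isFlat_cube_image L hL v T.1 0) hsub (by
    have := T.2; omega)
  simpa using this

/-! ### Surjectivity -/

def suppF {k : ℕ} (x : Fin k → ZMod 2) : Finset (Fin k) :=
  Finset.univ.filter (fun i => x i = 1)

def indic {k : ℕ} (T : Finset (Fin k)) : Fin k → ZMod 2 := fun i => if i ∈ T then 1 else 0

lemma suppF_indic {k : ℕ} (T : Finset (Fin k)) : suppF (indic T) = T := by
  ext i
  simp only [suppF, indic, Finset.mem_filter, Finset.mem_univ, true_and]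
  by_cases h : i ∈ T <;> simp [h]

lemma indic_suppF {k : ℕ} (x : Fin k → ZMod 2) : indic (suppF x) = x := by
  funext i
  simp only [indic, suppF, Finset.mem_filter, Finset.mem_univ, true_and]
  rcases zmod2_cases (x i) with h | h <;> simp [h]

lemma mem_cubeF_iff {k : ℕ} {T : Finset (Fin k)} {x : Fin k → ZMod 2} :
    x ∈ CubeF T ↔ suppF x ⊆ T := by
  constructor
  · intro h i hi
    have hx0 : ∀ j ∉ T, x j = 0 := (Finset.mem_filter.mp h).2
    have hx1 : x i = 1 := (Finset.mem_filter.mp hi).2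
    by_contra hiT
    rw [hx0 i hiT] at hx1
    exact absurd hx1 (by decide)
  · intro h
    refine Finset.mem_filter.mpr ⟨Finset.mem_univ _, ?_⟩
    intro i hi
    rcases zmod2_cases (x i) with h0 | h1
    · exact h0
    · exact absurd (h (Finset.mem_filter.mpr ⟨Finset.mem_univ _, h1⟩)) hi

def iota {k : ℕ} (c : Tset k → ZMod 2) : (Fin k → ZMod 2) → ZMod 2 :=
  fun x => if h : k - 3 ≤ (suppF x).card then c ⟨suppF x, h⟩ else 0

lemma sum_iota {k : ℕ} (c : Tset k → ZMod 2) (T' : Finset (Fin k)) :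
    ∑ x ∈ CubeF T', iota c x
      = ∑ T ∈ T'.powerset, (if h : k - 3 ≤ T.card then c ⟨T, h⟩ else 0) := by
  apply Finset.sum_bij' (fun x _ => suppF x) (fun T _ => indic T)
  · intro x hx
    rw [Finset.mem_powerset]
    exact mem_cubeF_iff.mp hx
  · intro T hT
    rw [mem_cubeF_iff, suppF_indic]
    exact Finset.mem_powerset.mp hT
  · intro x hx; exact indic_suppF x
  · intro T hT; exact suppF_indic T
  · intro x hx; rfl

def Psi (k : ℕ) : (Tset k → ZMod 2) →+ (Tset k → ZMod 2) :=
  AddMonoidHom.mk' (fun c => fun T' =>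
    ∑ T ∈ T'.1.powerset, (if h : k - 3 ≤ T.card then c ⟨T, h⟩ else 0)) (by
    intro a b
    funext T'
    rw [Pi.add_apply, ← Finset.sum_add_distrib]
    apply Finset.sum_congr rfl
    intro T _
    by_cases h : k - 3 ≤ T.card <;> simp [h] <;> rfl)

lemma psi_injective (k : ℕ) : Function.Injective (Psi k) := by
  rw [injective_iff_map_eq_zero]
  intro c hc
  by_contra hne
  have hS : (Finset.univ.filter (fun T : Tset k => c T ≠ 0)).Nonempty := by
    rw [Finset.filter_nonempty_iff]
    by_contra hall
    push_neg at hall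
    exact hne (funext fun T => by simpa using hall T (Finset.mem_univ T))
  obtain ⟨T', hT'mem, hT'min⟩ := Finset.exists_min_image _ (fun T : Tset k => T.1.card) hS
  have hT'ne : c T' ≠ 0 := (Finset.mem_filter.mp hT'mem).2
  have heval : (Psi k c) T' = 0 := by rw [hc]; rfl
  rw [show (Psi k c) T'
      = ∑ T ∈ T'.1.powerset, (if h : k - 3 ≤ T.card then c ⟨T, h⟩ else 0) from rfl] at heval
  rw [Finset.sum_eq_single_of_mem T'.1 (Finset.mem_powerset_self _)] at heval
  · rw [dif_pos T'.2] at heval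
    exact hT'ne heval
  · intro T hT hne'
    have hsub : T ⊂ T'.1 := Finset.ssubset_iff_subset_ne.mpr ⟨Finset.mem_powerset.mp hT, hne'⟩
    have hcard : T.card < T'.1.card := Finset.card_lt_card hsub
    by_cases h : k - 3 ≤ T.card
    · rw [dif_pos h]
      by_contra hne''
      have : (⟨T, h⟩ : Tset k) ∈ Finset.univ.filter (fun T : Tset k => c T ≠ 0) := by
        convert (Finset.mem_filter (s := Finset.univ) (p := fun T : Tset k => c T ≠ 0)).mpr ⟨Finset.mem_univ _, hne''⟩
        exact Iff.of_eq (by congr)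
      have h2 : T'.1.card ≤ T.card := hT'min ⟨T, h⟩ this
      omega
    · rw [dif_neg h]

lemma psi_surjective (k : ℕ) : Function.Surjective (Psi k) :=
  Finite.injective_iff_surjective.mp (psi_injective k)

lemma sigma_surjective {n k : ℕ}
    (L : (Fin k → ZMod 2) →ₗ[ZMod 2] (Fin n → ZMod 2)) (hL : Function.Injective L)
    (v : Fin n → ZMod 2) : Function.Surjective (SigmaMap n k L v) := by
  intro t
  obtain ⟨c, hc⟩ := psi_surjective k t
  have hφ : Function.Injective (fun x : Fin k → ZMod 2 => v + L x) := fun x y hxy => by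
    apply hL; simpa using hxy
  refine ⟨fun y => if h : ∃ x, v + L x = y then iota c h.choose else 0, ?_⟩
  have hf : ∀ x, (fun y => if h : ∃ x, v + L x = y then iota c h.choose else 0) (v + L x)
      = iota c x := by
    intro x
    have hex : ∃ x', v + L x' = v + L x := ⟨x, rfl⟩
    beta_reduce
    rw [dif_pos hex]
    congr 1
    exact hφ hex.choose_spec
  funext T'
  rw [show (SigmaMap n k L v _) T' = ∑ x ∈ CubeF T'.1, _ from rfl]
  calc ∑ x ∈ CubeF T'.1,
        (fun y => if h : ∃ x, v + L x = y then iota c h.choose else 0) (v + L x)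
      = ∑ x ∈ CubeF T'.1, iota c x := Finset.sum_congr rfl (fun x _ => hf x)
    _ = (Psi k c) T' := sum_iota c T'.1
    _ = t T' := by rw [hc]

lemma card_Tset (k : ℕ) (hk : 3 ≤ k) :
    Fintype.card (Tset k) = ∑ i ∈ Finset.range 4, Nat.choose k i := by
  have e : Tset k ≃ {T : Finset (Fin k) // T.card ≤ 3} := by
    refine Equiv.subtypeEquiv ⟨fun T => Tᶜ, fun T => Tᶜ, fun T => compl_compl T,
      fun T => compl_compl T⟩ ?_
    intro T
    have h1 : Tᶜ.card = k - T.card := by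
      rw [Finset.card_compl, Fintype.card_fin]
    have h2 : T.card ≤ k := by
      simpa using Finset.card_le_univ T
    simp only [Equiv.coe_fn_mk, h1]
    omega
  rw [Fintype.card_congr e, Fintype.card_subtype]
  have hfe : Finset.univ.filter (fun T : Finset (Fin k) => T.card ≤ 3)
      = (Finset.range 4).biUnion (fun i => Finset.powersetCard i Finset.univ) := by
    ext T
    simp only [Finset.mem_filter, Finset.mem_univ, true_and, Finset.mem_biUnion,
      Finset.mem_range, Finset.mem_powersetCard]
    constructor
    · intro h
      exact ⟨T.card, by omega, Finset.subset_univ _, rfl⟩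
    · rintro ⟨i, hi, -, rfl⟩
      omega
  rw [hfe, Finset.card_biUnion]
  · apply Finset.sum_congr rfl
    intro i _
    rw [Finset.card_powersetCard, Finset.card_univ, Fintype.card_fin]
  · intro i _ j _ hij
    simp only [Function.onFun]; rw [Finset.disjoint_left]
    intro T hTi hTj
    rw [Finset.mem_powersetCard] at hTi hTj
    exact hij (hTi.2 ▸ hTj.2)

lemma bad_card {n k : ℕ} (hk : 4 ≤ k) {A : Set (Fin n → ZMod 2)} (hA : IsFlat A k) :
    (Finset.univ.filter (fun f : BF n => DegLE f A (k - 4))).card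
      * Fintype.card (Tset k → ZMod 2) ≤ Fintype.card (BF n) := by
  obtain ⟨L, v, hL, hAeq⟩ := exists_param hA
  set σ := SigmaMap n k L v with hσ
  set φ := σ.toAddMonoidHom with hφ
  have hsurj : Function.Surjective φ := sigma_surjective L hL v
  -- card equation
  have hcardeq : Nat.card (BF n)
      = Nat.card (BF n ⧸ φ.ker) * Nat.card φ.ker :=
    AddSubgroup.card_eq_card_quotient_mul_card_addSubgroup φ.ker
  have hquot : Nat.card (BF n ⧸ φ.ker) = Nat.card (Tset k → ZMod 2) :=
    Nat.card_congr (QuotientAddGroup.quotientKerEquivOfSurjective φ hsurj).toEquiv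
  -- bad set injects into the kernel
  have hbad : (Finset.univ.filter (fun f : BF n => DegLE f A (k - 4))).card
      ≤ Nat.card φ.ker := by
    rw [← Fintype.card_subtype, Nat.card_eq_fintype_card]
    apply Fintype.card_le_of_injective
      (fun f => (⟨f.1, by
        have h0 : σ f.1 = 0 := sigma_zero_of_degLE hk L hL v hAeq f.2
        simpa [AddMonoidHom.mem_ker, hφ] using h0⟩ : φ.ker))
    intro f g hfg
    rw [Subtype.ext_iff] at hfg ⊢
    exact hfg
  calc (Finset.univ.filter (fun f : BF n => DegLE f A (k - 4))).card
        * Fintype.card (Tset k → ZMod 2)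
      ≤ Nat.card φ.ker * Fintype.card (Tset k → ZMod 2) :=
        Nat.mul_le_mul_right _ hbad
    _ = Nat.card (BF n) := by
        rw [hcardeq, hquot, Nat.card_eq_fintype_card (α := Tset k → ZMod 2),
          Nat.card_eq_fintype_card (α := φ.ker)]; ring
    _ = Fintype.card (BF n) := Nat.card_eq_fintype_card

def FlatsF (n k : ℕ) : Finset (Set (Fin n → ZMod 2)) :=
  Finset.univ.filter (fun A => IsFlat A k)

def theta {n k : ℕ} (p : Fin n → ZMod 2) (b : Fin k → (Fin n → ZMod 2)) :
    Set (Fin n → ZMod 2) :=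
  (fun w => p + w) '' ((Submodule.span (ZMod 2) (Set.range b) : Submodule (ZMod 2) _) :
    Set (Fin n → ZMod 2))

lemma fiber_large {n k : ℕ} {A : Set (Fin n → ZMod 2)} (hA : IsFlat A k) :
    2 ^ k * ∏ i ∈ Finset.range k, (2 ^ k - 2 ^ i)
      ≤ (Finset.univ.filter
          (fun pb : (Fin n → ZMod 2) × (Fin k → Fin n → ZMod 2) =>
            theta pb.1 pb.2 = A)).card := by
  obtain ⟨W, v, hW, hAeq⟩ := hA
  have hWfin : Module.Finite (ZMod 2) W := Module.Finite.of_finite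
  set indW : Finset (Fin k → Fin n → ZMod 2) :=
    Finset.univ.filter (fun b => (∀ i, b i ∈ W) ∧ LinearIndependent (ZMod 2) b) with hindW
  -- the product set sits inside the fiber
  have hsub : A.toFinite.toFinset ×ˢ indW ⊆
      Finset.univ.filter (fun pb : (Fin n → ZMod 2) × (Fin k → Fin n → ZMod 2) =>
        theta pb.1 pb.2 = A) := by
    rintro ⟨p, b⟩ hpb
    rw [Finset.mem_product] at hpb
    obtain ⟨hp, hb⟩ := hpb
    rw [Set.Finite.mem_toFinset] at hp
    rw [hindW, Finset.mem_filter] at hb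
    obtain ⟨-, hbW, hbind⟩ := hb
    refine Finset.mem_filter.mpr ⟨Finset.mem_univ _, ?_⟩
    have hspan : Submodule.span (ZMod 2) (Set.range b) = W := by
      apply Submodule.eq_of_le_of_finrank_le
      · rw [Submodule.span_le]
        rintro y ⟨i, rfl⟩
        exact hbW i
      · rw [hW, finrank_span_eq_card hbind, Fintype.card_fin]
    rw [theta, hspan]
    -- (p + ·) '' W = A  where  p ∈ A = (v + ·) '' W
    rw [hAeq] at hp ⊢
    obtain ⟨w₀, hw₀, rfl⟩ := hp
    ext y
    constructor
    · rintro ⟨w, hw, rfl⟩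
      exact ⟨w₀ + w, W.add_mem hw₀ hw, by dsimp; abel⟩
    · rintro ⟨w, hw, rfl⟩
      exact ⟨w - w₀, W.sub_mem hw hw₀, by dsimp; abel⟩
  have hcard : (A.toFinite.toFinset ×ˢ indW).card
      = 2 ^ k * ∏ i ∈ Finset.range k, (2 ^ k - 2 ^ i) := by
    rw [Finset.card_product, flat_card ⟨W, v, hW, hAeq⟩]
    congr 1
    -- card of independent tuples
    rw [hindW, ← Fintype.card_subtype]
    have E : {b : Fin k → Fin n → ZMod 2 //
        (∀ i, b i ∈ W) ∧ LinearIndependent (ZMod 2) b}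
        ≃ {s : Fin k → W // LinearIndependent (ZMod 2) s} := by
      refine ⟨fun b => ⟨fun i => ⟨b.1 i, b.2.1 i⟩, ?_⟩,
        fun s => ⟨fun i => (s.1 i : Fin n → ZMod 2),
          fun i => (s.1 i).2, s.2.map' W.subtype (Submodule.ker_subtype W)⟩,
        fun b => rfl, fun s => rfl⟩
      exact LinearIndependent.of_comp W.subtype b.2.2
    rw [Fintype.card_congr E, ← Nat.card_eq_fintype_card]
    have hk : k ≤ Module.finrank (ZMod 2) W := le_of_eq hW.symm
    have hcli := card_linearIndependent (K := ZMod 2) (V := W) hk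
    rw [hW, ZMod.card] at hcli
    rw [hcli]
    exact Fin.prod_univ_eq_prod_range (fun i => 2 ^ k - 2 ^ i) k
  calc 2 ^ k * ∏ i ∈ Finset.range k, (2 ^ k - 2 ^ i)
      = (A.toFinite.toFinset ×ˢ indW).card := hcard.symm
    _ ≤ _ := Finset.card_le_card hsub

lemma flats_count (n k : ℕ) :
    (FlatsF n k).card * (2 ^ k * ∏ i ∈ Finset.range k, (2 ^ k - 2 ^ i))
      ≤ 2 ^ (n * (k + 1)) := by
  have htotal : Fintype.card ((Fin n → ZMod 2) × (Fin k → Fin n → ZMod 2))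
      = 2 ^ (n * (k + 1)) := by
    rw [Fintype.card_prod, Fintype.card_fun, Fintype.card_fun]
    rw [Fintype.card_fun, ZMod.card, Fintype.card_fin, Fintype.card_fin]
    rw [← pow_mul, ← pow_add]
    ring_nf
  calc (FlatsF n k).card * (2 ^ k * ∏ i ∈ Finset.range k, (2 ^ k - 2 ^ i))
      ≤ ∑ A ∈ FlatsF n k,
          (Finset.univ.filter
            (fun pb : (Fin n → ZMod 2) × (Fin k → Fin n → ZMod 2) =>
              theta pb.1 pb.2 = A)).card := by
        rw [← smul_eq_mul]
        exact Finset.card_nsmul_le_sum _ _ _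
          (fun A hA => fiber_large ((Finset.mem_filter.mp hA).2))
    _ ≤ ∑ A ∈ (Finset.univ : Finset (Set (Fin n → ZMod 2))),
          (Finset.univ.filter
            (fun pb : (Fin n → ZMod 2) × (Fin k → Fin n → ZMod 2) =>
              theta pb.1 pb.2 = A)).card :=
        Finset.sum_le_sum_of_subset (Finset.filter_subset _ _)
    _ = (Finset.univ : Finset ((Fin n → ZMod 2) × (Fin k → Fin n → ZMod 2))).card :=
        (Finset.card_eq_sum_card_fiberwise (fun pb _ => Finset.mem_univ _)).symm
    _ = 2 ^ (n * (k + 1)) := by rw [Finset.card_univ, htotal]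

lemma key_numeric (k : ℕ) :
    2 ^ (k * (k + 1)) < 4 * (2 ^ k * (2 ^ (∑ i ∈ Finset.range k, i) * Pprod k)) := by
  have h := pprod_lower k
  have hsum : (∑ i ∈ Finset.range k, i) * 2 = k * (k - 1) := Finset.sum_range_id_mul_two k
  have h2 : k * (k + 1) = k * (k - 1) + 2 * k := by
    cases k with
    | zero => rfl
    | succ m => simp [Nat.succ_sub_one]; ring
  have hexp : k * (k + 1)
      = ((∑ i ∈ Finset.range k, i) + k) + ((∑ i ∈ Finset.range k, i) + k) := by
    linarith [hsum, h2]
  calc 2 ^ (k * (k + 1))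
      = 2 ^ ((∑ i ∈ Finset.range k, i) + k) * (2 ^ k * 2 ^ (∑ i ∈ Finset.range k, i)) := by
        rw [← pow_add, ← pow_add, hexp]; ring_nf
    _ < 2 ^ ((∑ i ∈ Finset.range k, i) + k) * ((2 ^ k + 2) * 2 ^ (∑ i ∈ Finset.range k, i)) := by
        exact (Nat.mul_lt_mul_left (by positivity)).mpr
          ((Nat.mul_lt_mul_right (by positivity)).mpr (by omega))
    _ = ((2 ^ k + 2) * 2 ^ ((∑ i ∈ Finset.range k, i) + k)) * 2 ^ (∑ i ∈ Finset.range k, i) := by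
        ring
    _ ≤ (2 ^ k * 4 * Pprod k) * 2 ^ (∑ i ∈ Finset.range k, i) :=
        Nat.mul_le_mul_right _ h
    _ = 4 * (2 ^ k * (2 ^ (∑ i ∈ Finset.range k, i) * Pprod k)) := by ring

lemma flats_lt {n k : ℕ} (hkn : k ≤ n) :
    (FlatsF n k).card < 2 ^ ((k + 1) * (n - k) + 2) := by
  by_contra hle
  push_neg at hle
  obtain ⟨m, rfl⟩ : ∃ m, n = k + m := ⟨n - k, by omega⟩
  have hm : k + m - k = m := by omega
  rw [hm] at hle
  have h1 := flats_count (k + m) k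
  have h2 : 2 ^ ((k + 1) * m + 2) * (2 ^ k * ∏ i ∈ Finset.range k, (2 ^ k - 2 ^ i))
      ≤ 2 ^ ((k + m) * (k + 1)) :=
    le_trans (Nat.mul_le_mul_right _ hle) h1
  have hexp : (k + m) * (k + 1) = (k + 1) * m + k * (k + 1) := by ring
  rw [hexp, pow_add, pow_add] at h2
  have h3 : 2 ^ 2 * (2 ^ k * ∏ i ∈ Finset.range k, (2 ^ k - 2 ^ i)) ≤ 2 ^ (k * (k + 1)) := by
    have hpos : 0 < 2 ^ ((k + 1) * m) := by positivity
    apply Nat.le_of_mul_le_mul_left _ hpos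
    calc 2 ^ ((k + 1) * m) * (2 ^ 2 * (2 ^ k * ∏ i ∈ Finset.range k, (2 ^ k - 2 ^ i)))
        = 2 ^ ((k + 1) * m) * 2 ^ 2 * (2 ^ k * ∏ i ∈ Finset.range k, (2 ^ k - 2 ^ i)) := by
          ring
      _ ≤ 2 ^ ((k + 1) * m) * 2 ^ (k * (k + 1)) := h2
  rw [NB_eq] at h3
  have := key_numeric k
  have h4 : (2:ℕ) ^ 2 = 4 := by norm_num
  rw [h4] at h3
  have : 4 * (2 ^ k * (2 ^ (∑ i ∈ Finset.range k, i) * Pprod k))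
      = 4 * (2 ^ k * (2 ^ (∑ i ∈ Finset.range k, i) * Pprod k)) := rfl
  omega


lemma exists_good {n k : ℕ} (hk : 5 ≤ k) (hkn : k ≤ n)
    (harith : (k + 1) * (n - k) + 2 ≤ ∑ i ∈ Finset.range 4, Nat.choose k i) :
    ∃ f : BF n, ∀ A, IsFlat A k → ¬ DegLE f A (k - 4) := by
  by_contra h
  push_neg at h
  have hcover : (Finset.univ : Finset (BF n)) ⊆ (FlatsF n k).biUnion
      (fun A => Finset.univ.filter (fun f => DegLE f A (k - 4))) := by
    intro f _
    obtain ⟨A, hA, hdeg⟩ := h f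
    exact Finset.mem_biUnion.mpr ⟨A, by simp [FlatsF, hA], by simp [hdeg]⟩
  have h1 : Fintype.card (BF n)
      ≤ ∑ A ∈ FlatsF n k, (Finset.univ.filter (fun f : BF n => DegLE f A (k - 4))).card := by
    rw [← Finset.card_univ]
    exact (Finset.card_le_card hcover).trans Finset.card_biUnion_le
  have hTcard : Fintype.card (Tset k → ZMod 2) = 2 ^ (∑ i ∈ Finset.range 4, Nat.choose k i) := by
    rw [Fintype.card_fun, ZMod.card, card_Tset k (by omega)]
  have h2 : Fintype.card (BF n) * 2 ^ (∑ i ∈ Finset.range 4, Nat.choose k i)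
      ≤ (FlatsF n k).card * Fintype.card (BF n) := by
    calc Fintype.card (BF n) * 2 ^ (∑ i ∈ Finset.range 4, Nat.choose k i)
        ≤ (∑ A ∈ FlatsF n k,
            (Finset.univ.filter (fun f : BF n => DegLE f A (k - 4))).card)
            * 2 ^ (∑ i ∈ Finset.range 4, Nat.choose k i) :=
          Nat.mul_le_mul_right _ h1
      _ = ∑ A ∈ FlatsF n k,
            (Finset.univ.filter (fun f : BF n => DegLE f A (k - 4))).card
            * 2 ^ (∑ i ∈ Finset.range 4, Nat.choose k i) := Finset.sum_mul _ _ _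
      _ ≤ ∑ A ∈ FlatsF n k, Fintype.card (BF n) := by
          apply Finset.sum_le_sum
          intro A hA
          rw [← hTcard]
          exact bad_card (by omega) ((Finset.mem_filter.mp hA).2)
      _ = (FlatsF n k).card * Fintype.card (BF n) := by
          rw [Finset.sum_const, smul_eq_mul]
  have h3 := flats_lt (n := n) (k := k) hkn
  have h4 : (FlatsF n k).card < 2 ^ (∑ i ∈ Finset.range 4, Nat.choose k i) :=
    lt_of_lt_of_le h3 (Nat.pow_le_pow_right (by norm_num) harith)
  have hBFpos : 0 < Fintype.card (BF n) := Fintype.card_pos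
  nlinarith [h2, h4, hBFpos]

lemma alpha_ge {n k : ℕ} (hk : 5 ≤ k) (hkn : k ≤ n) {f : BF n}
    (hgood : ∀ A, IsFlat A k → ¬ DegLE f A (k - 4)) :
    k - 3 ≤ alphaDeg f k := by
  apply le_csInf
  · obtain ⟨A, hA⟩ := exists_flat hkn
    exact ⟨degOn f A, A, hA, rfl⟩
  · rintro d ⟨A, hA, rfl⟩
    apply le_csInf
    · exact ⟨k, degLE_self f hA⟩
    · intro d' hd'
      by_contra hlt
      push_neg at hlt
      apply hgood A hA
      intro B hB hBA
      exact degLE_flats_ge hd' hB hBA (by omega)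


/-- For `k ≥ 5` and `3k/2 ≤ n ≤ (k+1)(k+4)/6`:
`(k+1)(n-k)+2 ≤ C(k,0)+C(k,1)+C(k,2)+C(k,3)` and `g(n,k) ≥ k-3`. -/
theorem stmt14 {n k : ℕ} (hk : 5 ≤ k) (h1 : 3 * k ≤ 2 * n)
    (h2 : 6 * n ≤ (k + 1) * (k + 4)) :
    (k + 1) * (n - k) + 2 ≤ ∑ i ∈ Finset.range 4, Nat.choose k i ∧
    k - 3 ≤ gdeg n k := by
  have hkn : k ≤ n := by omega
  have harith := arith_part hk h1 h2
  refine ⟨harith, ?_⟩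
  obtain ⟨f, hf⟩ := exists_good hk hkn harith
  have halpha : k - 3 ≤ alphaDeg f k := alpha_ge hk hkn hf
  have hbdd : BddAbove {m | ∃ f : BF n, alphaDeg f k = m} := by
    refine ⟨k, ?_⟩
    rintro m ⟨g, rfl⟩
    obtain ⟨A, hA⟩ := exists_flat hkn
    have hdeg : degOn g A ≤ k := Nat.sInf_le (degLE_self g hA)
    calc alphaDeg g k ≤ degOn g A := Nat.sInf_le ⟨A, hA, rfl⟩
      _ ≤ k := hdeg
  have hle : alphaDeg f k ≤ gdeg n k := le_csSup hbdd ⟨f, rfl⟩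
  exact le_trans halpha hle
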